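/- Let L be a 3-dimensional ℤ_p-Lie lattice with a basis (x₀,x₁,x₂) such that [x₁,x₂]=0, [x₀,x₁]=p^s(p^r x₁ + x₂), [x₀,x₂]=0 (s ∈ ℕ, r ∈ ℕ ∪ {∞}, p^∞ := 0), and let M ⊆ L be a subalgebra of index p. Then either Z(L) ⊆ M or [M,M] = [L,L]. -/

import Mathlib

/-- Let `L` be the 3-dimensional `ℤ_p`-Lie lattice with basis
`(x₀,x₁,x₂)`, `[x₁,x₂]=0`, `[x₀,x₁]=p^s(t x₁ + x₂)` (where `t = p^r` for some
`r ∈ ℕ`, or `t = 0`, encoding `r = ∞`), `[x₀,x₂]=0`, and let `M ⊆ L` be a subalgebra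
of index `p`. Then `Z(L) ⊆ M` or `[M,M] = [L,L]`. -/
theorem stmt_8 (p : ℕ) [Fact p.Prime] (s : ℕ) (t : ℤ_[p])
    (ht : (∃ r : ℕ, t = (p : ℤ_[p]) ^ r) ∨ t = 0)
    (L : Type*) [LieRing L] [LieAlgebra ℤ_[p] L]
    (b : Module.Basis (Fin 3) ℤ_[p] L)
    (h12 : ⁅b 1, b 2⁆ = 0)
    (h01 : ⁅b 0, b 1⁆ = (p : ℤ_[p]) ^ s • (t • b 1 + b 2))
    (h02 : ⁅b 0, b 2⁆ = 0)
    (M : LieSubalgebra ℤ_[p] L)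
    (hidx : Nat.card (L ⧸ M.toSubmodule) = p) :
    (∀ z : L, z ∈ LieAlgebra.center ℤ_[p] L → z ∈ M) ∨
      Submodule.span ℤ_[p] {z : L | ∃ x ∈ M, ∃ y ∈ M, ⁅x, y⁆ = z} =
        Submodule.span ℤ_[p] {z : L | ∃ x y : L, ⁅x, y⁆ = z} := by
  have h21 : ⁅b 2, b 1⁆ = 0 := by rw [← lie_skew, h12, neg_zero]
  have h20 : ⁅b 2, b 0⁆ = 0 := by rw [← lie_skew, h02, neg_zero]
  have h10 : ⁅b 1, b 0⁆ = -⁅b 0, b 1⁆ := by rw [← lie_skew]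
  have key : ∀ x y : L, ⁅x, y⁆ =
      (b.repr x 0 * b.repr y 1 - b.repr x 1 * b.repr y 0) • ⁅b 0, b 1⁆ := by
    intro x y
    have hx := b.sum_repr x
    have hy := b.sum_repr y
    rw [Fin.sum_univ_three] at hx hy
    conv_lhs => rw [← hx, ← hy]
    simp only [add_lie, lie_add, smul_lie, lie_smul, h12, h21, h20, h02, h10, lie_self,
      smul_zero, smul_neg, add_zero, zero_add, smul_smul]
    module
  have hp : (p : ℤ_[p]) ≠ 0 := by
    exact_mod_cast (Nat.cast_ne_zero (R := ℤ_[p])).mpr (Fact.out (p := p.Prime)).ne_zero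
  have hps : (p : ℤ_[p]) ^ s ≠ 0 := pow_ne_zero _ hp
  have hc2 : ∀ a : ℤ_[p], b.repr (a • ⁅b 0, b 1⁆) 2 = a * (p : ℤ_[p]) ^ s := by
    intro a
    rw [h01]
    simp [Finsupp.single_apply, mul_comm]
  by_cases hx2 : b 2 ∈ M
  · -- center ⊆ ℤ_p • b 2 ⊆ M
    left
    intro z hz
    have hz1 : ⁅b 0, z⁆ = 0 := hz (b 0)
    have hz0 : ⁅b 1, z⁆ = 0 := hz (b 1)
    rw [key] at hz1 hz0
    simp only [Module.Basis.repr_self, Finsupp.single_apply] at hz1 hz0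
    norm_num at hz1 hz0
    have e1 : b.repr z 1 = 0 := by
      have := congrArg (fun w => b.repr w 2) hz1
      simp only [map_zero, Finsupp.coe_zero, Pi.zero_apply] at this
      rw [hc2] at this
      exact (mul_eq_zero.mp this).resolve_right hps
    have e0 : b.repr z 0 = 0 := by
      have := congrArg (fun w => b.repr w 2) hz0
      simp only [map_zero, Finsupp.coe_zero, Pi.zero_apply] at this
      rw [hc2] at this
      have := (mul_eq_zero.mp this).resolve_right hps
      simpa using this
    have hzval : z = b.repr z 2 • b 2 := by
      have hx := b.sum_repr z
      rw [Fin.sum_univ_three, e0, e1] at hx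
      simp at hx
      exact hx.symm
    rw [hzval]
    exact M.smul_mem _ hx2
  · -- b 2 ∉ M : show [M,M] = [L,L]
    right
    have hfin : Finite (L ⧸ M.toSubmodule) := Nat.finite_of_card_ne_zero (by
      rw [hidx]; exact (Fact.out (p := p.Prime)).ne_zero)
    set q : L → L ⧸ M.toSubmodule := Submodule.Quotient.mk with hq
    have hq2 : q (b 2) ≠ 0 := by
      simpa [hq, Submodule.Quotient.mk_eq_zero] using hx2
    have horder : addOrderOf (q (b 2)) = p := by
      have hdvd : addOrderOf (q (b 2)) ∣ p := by
        have := addOrderOf_dvd_natCard (q (b 2))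
        rwa [hidx] at this
      rcases (Nat.Prime.eq_one_or_self_of_dvd (Fact.out) _ hdvd) with h | h
      · exact absurd (AddMonoid.addOrderOf_eq_one_iff.mp h) hq2
      · exact h
    have htop : AddSubgroup.zmultiples (q (b 2)) = ⊤ := by
      apply AddSubgroup.eq_top_of_card_eq
      rw [Nat.card_zmultiples, horder, hidx]
    have hmem : ∀ y : L, ∃ n : ℤ, y - (n : ℤ_[p]) • b 2 ∈ M := by
      intro y
      have : q y ∈ AddSubgroup.zmultiples (q (b 2)) := htop ▸ AddSubgroup.mem_top _
      obtain ⟨n, hn⟩ := AddSubgroup.mem_zmultiples_iff.mp this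
      refine ⟨n, ?_⟩
      have : q ((n : ℤ_[p]) • b 2) = q y := by
        rw [Int.cast_smul_eq_zsmul]
        exact_mod_cast hn
      exact (Submodule.Quotient.eq M.toSubmodule).mp this.symm
    obtain ⟨n0, hn0⟩ := hmem (b 0)
    obtain ⟨n1, hn1⟩ := hmem (b 1)
    have hbr : ⁅b 0 - (n0 : ℤ_[p]) • b 2, b 1 - (n1 : ℤ_[p]) • b 2⁆ = ⁅b 0, b 1⁆ := by
      simp [sub_lie, lie_sub, lie_smul, smul_lie, h02, h21, lie_self]
    apply le_antisymm
    · apply Submodule.span_mono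
      rintro z ⟨x, -, y, -, hxy⟩
      exact ⟨x, y, hxy⟩
    · rw [Submodule.span_le]
      rintro z ⟨x, y, rfl⟩
      rw [key x y]
      apply Submodule.smul_mem
      apply Submodule.subset_span
      exact ⟨_, hn0, _, hn1, hbr⟩
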